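/- Let 𝒪 ⊆ 𝒪′ be orders in an imaginary quadratic field K, and let Λ be an invertible (proper) fractional ideal of 𝒪. Then 𝒪′·Λ (the additive subgroup of K generated by products αx with α ∈ 𝒪′, x ∈ Λ) is an invertible fractional ideal of 𝒪′, and the natural map Λ ⊗_𝒪 𝒪′ → 𝒪′·Λ sending x ⊗ α to αx is an isomorphism of 𝒪′-modules. -/

import Mathlib

noncomputable section

open scoped TensorProduct

/-- An imaginary quadratic number field embedded in ℂ. -/
def IsImagQuad (K : Subfield ℂ) : Prop :=
  Module.finrank ℚ K = 2 ∧ ∃ z : K, (z : ℂ).im ≠ 0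

/-- An order in `K`: a subring of `K` free of rank 2 as a ℤ-module. -/
def IsOrderIn (K : Subfield ℂ) (O : Subring ℂ) : Prop :=
  O ≤ K.toSubring ∧ ∃ x y : ℂ, LinearIndependent ℝ ![x, y] ∧
    O.toAddSubgroup = AddSubgroup.closure {x, y}

/-- A fractional ideal of the order `O` in `K`. -/
def IsFracIdeal (K : Subfield ℂ) (O : Subring ℂ) (Λ : AddSubgroup ℂ) : Prop :=
  (Λ : Set ℂ) ⊆ K ∧ Λ ≠ ⊥ ∧ Λ.FG ∧ ∀ a ∈ O, ∀ x ∈ Λ, a * x ∈ Λ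

/-- The lattice product: the additive subgroup generated by all products `a * b`. -/
def latticeProduct (A B : AddSubgroup ℂ) : AddSubgroup ℂ :=
  AddSubgroup.closure {z : ℂ | ∃ a ∈ A, ∃ b ∈ B, z = a * b}

/-- An additive subgroup of ℂ stable under multiplication by a subring `O` is an
`O`-module, with scalar multiplication given by multiplication in ℂ. -/
@[reducible]
def modOfStable (O : Subring ℂ) (Λ : AddSubgroup ℂ)
    (h : ∀ a ∈ O, ∀ x ∈ Λ, a * x ∈ Λ) : Module O Λ :=
  letI : SMul O Λ := ⟨fun a x => ⟨(a : ℂ) * (x : ℂ), h a a.2 x x.2⟩⟩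
  { smul := (· • ·)
    one_smul := fun x => Subtype.ext (one_mul _)
    mul_smul := fun a b x => Subtype.ext (mul_assoc _ _ _)
    smul_zero := fun a => Subtype.ext (mul_zero _)
    smul_add := fun a x y => Subtype.ext (mul_add _ _ _)
    add_smul := fun a b x => Subtype.ext (add_mul _ _ _)
    zero_smul := fun x => Subtype.ext (zero_mul _) }

/-- The lattice product `O'·Λ` is stable under multiplication by `O'`. -/
lemma latticeProduct_stable (O' : Subring ℂ) (Λ : AddSubgroup ℂ) :
    ∀ a ∈ O', ∀ z ∈ latticeProduct O'.toAddSubgroup Λ,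
      a * z ∈ latticeProduct O'.toAddSubgroup Λ := by
  intro a ha z hz
  induction hz using AddSubgroup.closure_induction with
  | mem x hx =>
      obtain ⟨b, hb, y, hy, rfl⟩ := hx
      exact AddSubgroup.subset_closure ⟨a * b, O'.mul_mem ha hb, y, hy, by ring⟩
  | zero => simpa using (latticeProduct O'.toAddSubgroup Λ).zero_mem
  | add x y _ _ hx hy => simpa [mul_add] using
      (latticeProduct O'.toAddSubgroup Λ).add_mem hx hy
  | neg x _ hx => simpa [mul_neg] using (latticeProduct O'.toAddSubgroup Λ).neg_mem hx


open Pointwise Finset in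
lemma mem_latticeProduct {A B : AddSubgroup ℂ} {a b : ℂ} (ha : a ∈ A) (hb : b ∈ B) :
    a * b ∈ latticeProduct A B :=
  AddSubgroup.subset_closure ⟨a, ha, b, hb, rfl⟩

lemma latticeProduct_le {A B C : AddSubgroup ℂ}
    (h : ∀ a ∈ A, ∀ b ∈ B, a * b ∈ C) : latticeProduct A B ≤ C := by
  rw [latticeProduct, AddSubgroup.closure_le]
  rintro z ⟨a, ha, b, hb, rfl⟩
  exact h a ha b hb

lemma latticeProduct_comm (A B : AddSubgroup ℂ) : latticeProduct A B = latticeProduct B A := by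
  apply le_antisymm <;>
  · apply latticeProduct_le
    intro a ha b hb
    rw [mul_comm]
    exact mem_latticeProduct hb ha

lemma latticeProduct_induction {A B : AddSubgroup ℂ} {P : ℂ → Prop}
    (mem : ∀ a ∈ A, ∀ b ∈ B, P (a * b)) (zero : P 0)
    (add : ∀ u v, P u → P v → P (u + v)) (neg : ∀ u, P u → P (-u)) :
    ∀ z ∈ latticeProduct A B, P z := by
  intro z hz
  induction hz using AddSubgroup.closure_induction with
  | mem w hw => obtain ⟨a, ha, b, hb, rfl⟩ := hw; exact mem a ha b hb
  | zero => exact zero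
  | add u v _ _ hu hv => exact add u v hu hv
  | neg u _ hu => exact neg u hu

lemma latticeProduct_assoc (A B C : AddSubgroup ℂ) :
    latticeProduct (latticeProduct A B) C = latticeProduct A (latticeProduct B C) := by
  apply le_antisymm
  · apply latticeProduct_le
    intro z hz c hc
    refine latticeProduct_induction (P := fun z => z * c ∈ latticeProduct A (latticeProduct B C))
      ?_ ?_ ?_ ?_ z hz
    · intro a ha b hb
      rw [mul_assoc]
      exact mem_latticeProduct ha (mem_latticeProduct hb hc)
    · simpa using (latticeProduct A (latticeProduct B C)).zero_mem
    · intro u v hu hv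
      simpa [add_mul] using AddSubgroup.add_mem _ hu hv
    · intro u hu
      simpa [neg_mul] using AddSubgroup.neg_mem _ hu
  · apply latticeProduct_le
    intro a ha z hz
    refine latticeProduct_induction (P := fun z => a * z ∈ latticeProduct (latticeProduct A B) C)
      ?_ ?_ ?_ ?_ z hz
    · intro b hb c hc
      rw [← mul_assoc]
      exact mem_latticeProduct (mem_latticeProduct ha hb) hc
    · simpa using (latticeProduct (latticeProduct A B) C).zero_mem
    · intro u v hu hv
      simpa [mul_add] using AddSubgroup.add_mem _ hu hv
    · intro u hu
      simpa [mul_neg] using AddSubgroup.neg_mem _ hu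

lemma latticeProduct_subring_self (O' : Subring ℂ) :
    latticeProduct O'.toAddSubgroup O'.toAddSubgroup = O'.toAddSubgroup := by
  apply le_antisymm
  · exact latticeProduct_le fun a ha b hb => O'.mul_mem ha hb
  · intro a ha
    exact (by simpa using mem_latticeProduct ha (Subring.mem_toAddSubgroup.mpr O'.one_mem) : a ∈ latticeProduct O'.toAddSubgroup O'.toAddSubgroup)

lemma latticeProduct_subring_of_le {O O' : Subring ℂ} (h : O ≤ O') :
    latticeProduct O'.toAddSubgroup O.toAddSubgroup = O'.toAddSubgroup := by
  apply le_antisymm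
  · exact latticeProduct_le fun a ha b hb => O'.mul_mem ha (h hb)
  · intro a ha
    exact (by simpa using mem_latticeProduct ha (Subring.mem_toAddSubgroup.mpr O.one_mem) : a ∈ latticeProduct O'.toAddSubgroup O.toAddSubgroup)

open Pointwise in
lemma latticeProduct_fg {A B : AddSubgroup ℂ} (hA : A.FG) (hB : B.FG) :
    (latticeProduct A B).FG := by
  classical
  obtain ⟨S, hS⟩ := hA
  obtain ⟨T, hT⟩ := hB
  refine ⟨S * T, le_antisymm ?_ ?_⟩
  · rw [AddSubgroup.closure_le]
    intro z hz
    rw [Finset.coe_mul] at hz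
    obtain ⟨a, ha, b, hb, rfl⟩ := hz
    exact mem_latticeProduct (hS ▸ AddSubgroup.subset_closure ha)
      (hT ▸ AddSubgroup.subset_closure hb)
  · rw [← hS, ← hT]
    apply latticeProduct_le
    intro a ha
    induction ha using AddSubgroup.closure_induction with
    | mem u hu =>
        intro b hb
        induction hb using AddSubgroup.closure_induction with
        | mem v hv =>
            exact AddSubgroup.subset_closure (by
              rw [Finset.coe_mul]; exact Set.mul_mem_mul hu hv)
        | zero => simpa using AddSubgroup.zero_mem _
        | add p q _ _ hp hq => simpa [mul_add] using AddSubgroup.add_mem _ hp hq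
        | neg p _ hp => simpa [mul_neg] using AddSubgroup.neg_mem _ hp
    | zero => intro b _; simpa using AddSubgroup.zero_mem _
    | add p q _ _ hp hq =>
        intro b hb
        simpa [add_mul] using AddSubgroup.add_mem _ (hp b hb) (hq b hb)
    | neg p _ hp =>
        intro b hb
        simpa [neg_mul] using AddSubgroup.neg_mem _ (hp b hb)

lemma exists_sum_eq_one {Λ M : AddSubgroup ℂ} {O : Subring ℂ}
    (h : latticeProduct Λ M = O.toAddSubgroup) :
    ∃ (s : Finset ℂ) (x y : ℂ → ℂ), (∀ z ∈ s, x z ∈ Λ) ∧ (∀ z ∈ s, y z ∈ M) ∧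
      ∑ z ∈ s, x z * y z = 1 := by
  classical
  have h1 : (1 : ℂ) ∈ latticeProduct Λ M := by rw [h]; exact O.one_mem
  rw [latticeProduct, ← Submodule.span_int_eq_addSubgroupClosure,
    Submodule.mem_toAddSubgroup, Submodule.mem_span_set] at h1
  obtain ⟨c, hc, hsum⟩ := h1
  choose! a ha b hb hab using fun z (hz : z ∈ (c.support : Set ℂ)) => hc hz
  refine ⟨c.support, fun z => (c z : ℤ) • a z, b, ?_, ?_, ?_⟩
  · intro z hz
    exact AddSubgroup.zsmul_mem _ (ha z hz) _
  · intro z hz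
    exact hb z hz
  · rw [Finsupp.sum] at hsum
    rw [← hsum]
    refine Finset.sum_congr rfl fun z hz => ?_
    rw [smul_mul_assoc, ← hab z hz]

set_option maxHeartbeats 1000000 in
set_option synthInstance.maxHeartbeats 1000000 in
lemma tensor_equiv_aux (O O' : Subring ℂ) (hOO' : O ≤ O') (Λ : AddSubgroup ℂ)
    (hstab : ∀ a ∈ O, ∀ x ∈ Λ, a * x ∈ Λ)
    (s : Finset ℂ) (x y : ℂ → ℂ)
    (hx : ∀ z ∈ s, x z ∈ Λ)
    (hΛy : ∀ v ∈ Λ, ∀ z ∈ s, v * y z ∈ O)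
    (hPy : ∀ w ∈ latticeProduct O'.toAddSubgroup Λ, ∀ z ∈ s, w * y z ∈ O')
    (hsum : ∑ z ∈ s, x z * y z = 1) :
    letI : Module O Λ := modOfStable O Λ hstab
    letI : Module O O'.toAddSubgroup :=
      modOfStable O O'.toAddSubgroup (fun a ha x hx => O'.mul_mem (hOO' ha) hx)
    letI : Module O' O'.toAddSubgroup :=
      modOfStable O' O'.toAddSubgroup (fun a ha x hx => O'.mul_mem ha hx)
    letI : SMulCommClass O O' O'.toAddSubgroup :=
      ⟨fun a b x => Subtype.ext (mul_left_comm (a : ℂ) (b : ℂ) (x : ℂ))⟩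
    letI : Module O' (latticeProduct O'.toAddSubgroup Λ) :=
      modOfStable O' (latticeProduct O'.toAddSubgroup Λ) (latticeProduct_stable O' Λ)
    ∃ e : (O'.toAddSubgroup ⊗[O] Λ) ≃ₗ[O'] latticeProduct O'.toAddSubgroup Λ,
      ∀ (α : O'.toAddSubgroup) (v : Λ),
        (e (α ⊗ₜ[O] v) : ℂ) = (α : ℂ) * (v : ℂ) := by
  classical
  letI : Module O Λ := modOfStable O Λ hstab
  letI : Module O O'.toAddSubgroup :=
    modOfStable O O'.toAddSubgroup (fun a ha x hx => O'.mul_mem (hOO' ha) hx)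
  letI : Module O' O'.toAddSubgroup :=
    modOfStable O' O'.toAddSubgroup (fun a ha x hx => O'.mul_mem ha hx)
  letI : SMulCommClass O O' O'.toAddSubgroup :=
    ⟨fun a b x => Subtype.ext (mul_left_comm (a : ℂ) (b : ℂ) (x : ℂ))⟩
  letI : Module O' (latticeProduct O'.toAddSubgroup Λ) :=
    modOfStable O' (latticeProduct O'.toAddSubgroup Λ) (latticeProduct_stable O' Λ)
  have coe_smul_O_O' : ∀ (r : O) (α : O'.toAddSubgroup),
      ((r • α : O'.toAddSubgroup) : ℂ) = (r : ℂ) * (α : ℂ) := fun _ _ => rfl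
  have coe_smul_O_Λ : ∀ (r : O) (v : Λ), ((r • v : Λ) : ℂ) = (r : ℂ) * (v : ℂ) :=
    fun _ _ => rfl
  have coe_smul_O'_O' : ∀ (c : O') (α : O'.toAddSubgroup),
      ((c • α : O'.toAddSubgroup) : ℂ) = (c : ℂ) * (α : ℂ) := fun _ _ => rfl
  have coe_smul_O'_P : ∀ (c : O') (w : (latticeProduct O'.toAddSubgroup Λ)), ((c • w : (latticeProduct O'.toAddSubgroup Λ)) : ℂ) = (c : ℂ) * (w : ℂ) :=
    fun _ _ => rfl
  -- the forward additive map
  let f : O'.toAddSubgroup →+ Λ →+ (latticeProduct O'.toAddSubgroup Λ) :=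
    { toFun := fun α =>
        { toFun := fun v => ⟨(α : ℂ) * (v : ℂ), mem_latticeProduct α.2 v.2⟩
          map_zero' := Subtype.ext (mul_zero _)
          map_add' := fun v w => Subtype.ext (mul_add _ _ _) }
      map_zero' := AddMonoidHom.ext fun v => Subtype.ext (zero_mul _)
      map_add' := fun α β => AddMonoidHom.ext fun v => Subtype.ext (add_mul _ _ _) }
  have hcompat : ∀ (r : O) (α : O'.toAddSubgroup) (v : Λ), f (r • α) v = f α (r • v) := by
    intro r α v
    refine Subtype.ext ?_
    show ((r • α : O'.toAddSubgroup) : ℂ) * (v : ℂ) = (α : ℂ) * ((r • v : Λ) : ℂ)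
    rw [coe_smul_O_O', coe_smul_O_Λ]
    ring
  let emap : (O'.toAddSubgroup ⊗[O] Λ) →+ (latticeProduct O'.toAddSubgroup Λ) := TensorProduct.liftAddHom f hcompat
  have emap_tmul : ∀ (α : O'.toAddSubgroup) (v : Λ),
      (emap (α ⊗ₜ[O] v) : ℂ) = (α : ℂ) * (v : ℂ) := fun α v => rfl
  let elin : (O'.toAddSubgroup ⊗[O] Λ) →ₗ[O'] (latticeProduct O'.toAddSubgroup Λ) :=
    { toFun := emap
      map_add' := emap.map_add
      map_smul' := by
        intro c t
        simp only [RingHom.id_apply]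
        induction t using TensorProduct.induction_on with
        | zero => simp
        | tmul α v =>
            rw [TensorProduct.smul_tmul']
            refine Subtype.ext ?_
            rw [coe_smul_O'_P, emap_tmul, emap_tmul, coe_smul_O'_O']
            ring
        | add t1 t2 h1 h2 =>
            rw [smul_add, map_add, map_add, h1, h2, smul_add] }
  let glin : (latticeProduct O'.toAddSubgroup Λ) →ₗ[O'] (O'.toAddSubgroup ⊗[O] Λ) :=
    { toFun := fun w => ∑ z ∈ s.attach,
        (⟨(w : ℂ) * y z.1, hPy w w.2 z.1 z.2⟩ : O'.toAddSubgroup) ⊗ₜ[O]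
          (⟨x z.1, hx z.1 z.2⟩ : Λ)
      map_add' := by
        intro w1 w2
        rw [← Finset.sum_add_distrib]
        refine Finset.sum_congr rfl fun z hz => ?_
        rw [← TensorProduct.add_tmul]
        congr 1
        exact Subtype.ext (add_mul _ _ _)
      map_smul' := by
        intro c w
        simp only [RingHom.id_apply]
        rw [Finset.smul_sum]
        refine Finset.sum_congr rfl fun z hz => ?_
        have hcw : (⟨((c • w : (latticeProduct O'.toAddSubgroup Λ)) : ℂ) * y z.1,
              hPy _ (c • w).2 z.1 z.2⟩ : O'.toAddSubgroup)
            = c • (⟨(w : ℂ) * y z.1, hPy _ w.2 z.1 z.2⟩ : O'.toAddSubgroup) := by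
          refine Subtype.ext ?_
          show ((c • w : (latticeProduct O'.toAddSubgroup Λ)) : ℂ) * y z.1 = _
          rw [coe_smul_O'_P, coe_smul_O'_O']
          show ((c : ℂ) * (w : ℂ)) * y z.1 = (c : ℂ) * ((w : ℂ) * y z.1)
          ring
        rw [hcw, TensorProduct.smul_tmul'] }
  have h1 : elin.comp glin = LinearMap.id := by
    apply LinearMap.ext
    intro w
    simp only [LinearMap.comp_apply, LinearMap.id_apply]
    refine Subtype.ext ?_
    show ((emap (∑ z ∈ s.attach, _)) : ℂ) = (w : ℂ)
    rw [map_sum]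
    rw [AddSubmonoidClass.coe_finset_sum]
    calc ∑ z ∈ s.attach, ((w : ℂ) * y z.1) * x z.1
        = ∑ z ∈ s, ((w : ℂ) * y z) * x z :=
          Finset.sum_attach s (fun z => ((w : ℂ) * y z) * x z)
      _ = (w : ℂ) * ∑ z ∈ s, x z * y z := by
          rw [Finset.mul_sum]; exact Finset.sum_congr rfl fun z _ => by ring
      _ = (w : ℂ) := by rw [hsum, mul_one]
  have h2 : glin.comp elin = LinearMap.id := by
    apply LinearMap.ext
    intro t
    induction t using TensorProduct.induction_on with
    | zero => simp
    | tmul α v =>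
        simp only [LinearMap.comp_apply, LinearMap.id_apply]
        have step1 : ∀ z ∈ s.attach,
            ((⟨((elin (α ⊗ₜ[O] v) : (latticeProduct O'.toAddSubgroup Λ)) : ℂ) * y z.1,
                hPy _ (elin (α ⊗ₜ[O] v)).2 z.1 z.2⟩ : O'.toAddSubgroup) ⊗ₜ[O]
              (⟨x z.1, hx z.1 z.2⟩ : Λ))
            = α ⊗ₜ[O] (⟨((v : ℂ) * y z.1) * x z.1,
                hstab _ (hΛy v v.2 z.1 z.2) _ (hx z.1 z.2)⟩ : Λ) := by
          intro z hz
          have hav : ((elin (α ⊗ₜ[O] v) : (latticeProduct O'.toAddSubgroup Λ)) : ℂ) = (α : ℂ) * (v : ℂ) := emap_tmul α v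
          have heqa : (⟨((elin (α ⊗ₜ[O] v) : (latticeProduct O'.toAddSubgroup Λ)) : ℂ) * y z.1,
              hPy _ (elin (α ⊗ₜ[O] v)).2 z.1 z.2⟩ : O'.toAddSubgroup)
              = (⟨(v : ℂ) * y z.1, hΛy v v.2 z.1 z.2⟩ : O) • α := by
            refine Subtype.ext ?_
            show ((elin (α ⊗ₜ[O] v) : (latticeProduct O'.toAddSubgroup Λ)) : ℂ) * y z.1 = _
            rw [coe_smul_O_O', hav]
            show ((α : ℂ) * (v : ℂ)) * y z.1 = ((v : ℂ) * y z.1) * (α : ℂ)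
            ring
          rw [heqa, TensorProduct.smul_tmul]
          congr 1
        show (∑ z ∈ s.attach, _) = α ⊗ₜ[O] v
        rw [Finset.sum_congr rfl step1, ← TensorProduct.tmul_sum]
        congr 1
        refine Subtype.ext ?_
        rw [AddSubmonoidClass.coe_finset_sum]
        calc ∑ z ∈ s.attach, ((v : ℂ) * y z.1) * x z.1
            = ∑ z ∈ s, ((v : ℂ) * y z) * x z :=
              Finset.sum_attach s (fun z => ((v : ℂ) * y z) * x z)
          _ = (v : ℂ) * ∑ z ∈ s, x z * y z := by
              rw [Finset.mul_sum]; exact Finset.sum_congr rfl fun z _ => by ring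
          _ = (v : ℂ) := by rw [hsum, mul_one]
    | add t1 t2 ht1 ht2 =>
        simp only [LinearMap.comp_apply, LinearMap.id_apply] at ht1 ht2 ⊢
        rw [map_add, map_add, ht1, ht2]
  refine ⟨LinearEquiv.ofLinear elin glin h1 h2, ?_⟩
  intro α v
  rw [LinearEquiv.ofLinear_apply]
  exact emap_tmul α v

/-- Let `𝒪 ⊆ 𝒪′` be orders in an imaginary quadratic field `K ⊆ ℂ` and let
`Λ` be an invertible fractional ideal of `𝒪`.  Then `𝒪′·Λ` is an invertible fractional
ideal of `𝒪′`, and the natural map `Λ ⊗_𝒪 𝒪′ → 𝒪′·Λ`, `x ⊗ α ↦ αx` (written here with the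
tensor factors in the order `𝒪′ ⊗_𝒪 Λ`, `α ⊗ x ↦ αx`), is an isomorphism of
`𝒪′`-modules. -/
theorem statement11 (K : Subfield ℂ) (hK : IsImagQuad K)
    (O O' : Subring ℂ) (hO : IsOrderIn K O) (hO' : IsOrderIn K O') (hOO' : O ≤ O')
    (Λ : AddSubgroup ℂ) (hΛ : IsFracIdeal K O Λ)
    (hinv : ∃ M : AddSubgroup ℂ, IsFracIdeal K O M ∧
      latticeProduct Λ M = O.toAddSubgroup) :
    (IsFracIdeal K O' (latticeProduct O'.toAddSubgroup Λ) ∧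
      ∃ M : AddSubgroup ℂ, IsFracIdeal K O' M ∧
        latticeProduct (latticeProduct O'.toAddSubgroup Λ) M = O'.toAddSubgroup) ∧
    (letI : Module O Λ := modOfStable O Λ hΛ.2.2.2
     letI : Module O O'.toAddSubgroup :=
       modOfStable O O'.toAddSubgroup (fun a ha x hx => O'.mul_mem (hOO' ha) hx)
     letI : Module O' O'.toAddSubgroup :=
       modOfStable O' O'.toAddSubgroup (fun a ha x hx => O'.mul_mem ha hx)
     letI : SMulCommClass O O' O'.toAddSubgroup :=
       ⟨fun a b x => Subtype.ext (mul_left_comm (a : ℂ) (b : ℂ) (x : ℂ))⟩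
     letI : Module O' (latticeProduct O'.toAddSubgroup Λ) :=
       modOfStable O' (latticeProduct O'.toAddSubgroup Λ) (latticeProduct_stable O' Λ)
     ∃ e : (O'.toAddSubgroup ⊗[O] Λ) ≃ₗ[O'] latticeProduct O'.toAddSubgroup Λ,
       ∀ (α : O'.toAddSubgroup) (x : Λ),
         (e (α ⊗ₜ[O] x) : ℂ) = (α : ℂ) * (x : ℂ)) := by
  classical
  obtain ⟨M, hM, hMeq⟩ := hinv
  have hΛK := hΛ.1
  have hΛne := hΛ.2.1
  have hΛfg := hΛ.2.2.1
  have hΛstab := hΛ.2.2.2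
  obtain ⟨hMK, hMne, hMfg, hMstab⟩ := hM
  obtain ⟨hO'K, xg, yg, hli, hO'cl⟩ := hO'
  have hO'fg : O'.toAddSubgroup.FG := ⟨{xg, yg}, by
    rw [hO'cl]; congr 1; simp⟩
  have hPMeq : latticeProduct (latticeProduct O'.toAddSubgroup Λ) M = O'.toAddSubgroup := by
    rw [latticeProduct_assoc, hMeq, latticeProduct_subring_of_le hOO']
  have hfrac : ∀ N : AddSubgroup ℂ, (N : Set ℂ) ⊆ K → N ≠ ⊥ → N.FG →
      IsFracIdeal K O' (latticeProduct O'.toAddSubgroup N) := by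
    intro N hNK hNne hNfg
    refine ⟨?_, ?_, latticeProduct_fg hO'fg hNfg, latticeProduct_stable O' N⟩
    · intro z hz
      exact latticeProduct_le (C := K.toSubring.toAddSubgroup)
        (fun a ha b hb => K.mul_mem (hO'K ha) (hNK hb)) hz
    · have hle : N ≤ latticeProduct O'.toAddSubgroup N := by
        intro v hv
        simpa using mem_latticeProduct (Subring.mem_toAddSubgroup.mpr O'.one_mem) hv
      intro hbot
      exact hNne (le_bot_iff.mp (hbot ▸ hle))
  constructor
  · refine ⟨hfrac Λ hΛK hΛne hΛfg, latticeProduct O'.toAddSubgroup M,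
      hfrac M hMK hMne hMfg, ?_⟩
    rw [latticeProduct_assoc, ← latticeProduct_assoc Λ O'.toAddSubgroup M,
      latticeProduct_comm Λ O'.toAddSubgroup, latticeProduct_assoc O'.toAddSubgroup Λ M,
      hMeq, latticeProduct_subring_of_le hOO', latticeProduct_subring_self]
  · obtain ⟨s, x, y, hx, hy, hsum⟩ := exists_sum_eq_one hMeq
    have hΛy : ∀ v ∈ Λ, ∀ z ∈ s, v * y z ∈ O := by
      intro v hv z hz
      have : v * y z ∈ latticeProduct Λ M := mem_latticeProduct hv (hy z hz)
      rwa [hMeq] at this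
    have hPy : ∀ w ∈ latticeProduct O'.toAddSubgroup Λ, ∀ z ∈ s, w * y z ∈ O' := by
      intro w hw z hz
      have : w * y z ∈ latticeProduct (latticeProduct O'.toAddSubgroup Λ) M :=
        mem_latticeProduct hw (hy z hz)
      rwa [hPMeq] at this
    exact tensor_equiv_aux O O' hOO' Λ hΛstab s x y hx hΛy hPy hsum
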